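/- Let (R,m,k) ⊆ (S,n,ℓ) be a module-finite local extension of normal local domains with finite separable fraction field extension, and suppose the trace map Tr : S → R is surjective. Let D = S·Tr ⊆ Hom_R(S,R) be the S-submodule generated by Tr, where S acts on Hom_R(S,R) by premultiplication (s·φ)(x) = φ(sx). Then {φ ∈ D : φ(S) ⊆ m} = n·D, and length_R(D / (n·D)) = [ℓ : k]. -/

import Mathlib

open IsLocalRing
set_option maxHeartbeats 1000000
set_option synthInstance.maxHeartbeats 400000

/-- The `R`-linear map `S → Hom_R(S,R)` sending `s` to `x ↦ Tr (s * x)`, i.e. premultiplication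
of the trace map by `s`.  Its range is the `S`-submodule `S · Tr` of `Hom_R(S,R)` and the image
of `n` is `n · (S · Tr)`. -/
noncomputable def traceMulMap (R S : Type*) [CommRing R] [CommRing S] [Algebra R S]
    (Tr : S →ₗ[R] R) : S →ₗ[R] (S →ₗ[R] R) :=
  (LinearMap.llcomp R S S R Tr).comp (LinearMap.mul R S)

section aux
open Order Module
lemma height_top_eq_finrank (F V : Type*) [Field F] [AddCommGroup V] [Module F V]
    [FiniteDimensional F V] :
    Order.height (⊤ : Submodule F V) = (Module.finrank F V : ℕ∞) := by
  apply le_antisymm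
  · have h := Order.height_le_height_apply_of_strictMono
      (fun s : Submodule F V => finrank F s) Submodule.finrank_strictMono ⊤
    simpa [Order.height_nat, finrank_top] using h
  · let b := Module.finBasis F V
    let p : LTSeries (Submodule F V) :=
      ⟨Module.finrank F V, fun i => b.flag i, fun i => b.flag_strictMono (Fin.castSucc_lt_succ (i := i))⟩
    have hlast : p.last = ⊤ := by simp [p, RelSeries.last, b.flag_last]
    have := Order.length_le_height_last (p := p)
    rw [hlast] at this
    simpa [p] using this
end aux

theorem trace_mem_maximalIdeal
    {R S K L : Type*}
    [CommRing R] [IsDomain R] [IsLocalRing R]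
    [CommRing S] [IsDomain S] [IsLocalRing S]
    [Algebra R S] [Module.Finite R S]
    [Field K] [Field L] [Algebra R K] [IsFractionRing R K]
    [Algebra S L] [IsFractionRing S L]
    [Algebra K L] [Algebra R L] [IsScalarTower R S L] [IsScalarTower R K L]
    [FiniteDimensional K L] [Algebra.IsSeparable K L]
    (Tr : S →ₗ[R] R)
    (hTr : ∀ s : S, algebraMap R K (Tr s) = Algebra.trace K L (algebraMap S L s))
    {t : S} (ht : t ∈ maximalIdeal S) : Tr t ∈ maximalIdeal R := by
  classical
  haveI : Algebra.IsIntegral R S := Algebra.IsIntegral.of_finite R S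
  let E := AlgebraicClosure K
  set T := integralClosure R E with hT
  have hinjE : Function.Injective (algebraMap R E) := by
    rw [IsScalarTower.algebraMap_eq R K E]
    exact (algebraMap K E).injective.comp (IsFractionRing.injective R K)
  have hker : RingHom.ker (algebraMap R T) ≤ maximalIdeal R := by
    intro x hx
    have h0 : algebraMap R E x = 0 := by
      have := congrArg (Subtype.val) (RingHom.mem_ker.mp hx)
      simpa using this
    have : x = 0 := hinjE (by simpa using h0)
    simp [this]
  obtain ⟨Q, hQmax, hQcomap⟩ :=
    Ideal.exists_ideal_over_maximal_of_isIntegral (S := T) (maximalIdeal R) hker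
  have hg : ∀ σ : L →ₐ[K] E, ∃ gσ : S →ₐ[R] T,
      (∀ s : S, (gσ s : E) = σ (algebraMap S L s)) ∧ gσ t ∈ Q := by
    intro σ
    let f : S →ₐ[R] E := (σ.restrictScalars R).comp (IsScalarTower.toAlgHom R S L)
    have hfint : ∀ s : S, f s ∈ T := fun s =>
      IsIntegral.map f (Algebra.IsIntegral.isIntegral s)
    let g : S →ₐ[R] T := f.codRestrict T hfint
    refine ⟨g, fun s => rfl, ?_⟩
    let q : Ideal S := Q.comap g.toRingHom
    have hqc : q.comap (algebraMap R S) = maximalIdeal R := by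
      show (Q.comap g.toRingHom).comap (algebraMap R S) = maximalIdeal R
      have hcomp : g.toRingHom.comp (algebraMap R S) = algebraMap R ↥T :=
        RingHom.ext fun r => g.commutes r
      rw [Ideal.comap_comap, hcomp, hQcomap]
    haveI : q.IsPrime := Ideal.IsPrime.comap _ (hK := hQmax.isPrime)
    have hqmax : q.IsMaximal :=
      Ideal.isMaximal_of_isIntegral_of_isMaximal_comap q
        (hqc ▸ IsLocalRing.maximalIdeal.isMaximal R)
    have : q = maximalIdeal S := IsLocalRing.eq_maximalIdeal hqmax
    show t ∈ q
    rw [this]; exact ht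
  choose g hgval hgQ using hg
  have hsum : algebraMap R T (Tr t) = ∑ σ : L →ₐ[K] E, g σ t := by
    apply Subtype.ext
    have hR : ((algebraMap R T (Tr t) : T) : E) = algebraMap R E (Tr t) := rfl
    have hS : ((∑ σ : L →ₐ[K] E, g σ t : T) : E) = ∑ σ : L →ₐ[K] E, ((g σ t : T) : E) := by
      exact map_sum T.val _ _
    rw [hR, hS]
    rw [IsScalarTower.algebraMap_apply R K E, hTr, trace_eq_sum_embeddings E]
    exact Finset.sum_congr rfl fun σ _ => (hgval σ t).symm
  have : Tr t ∈ Q.comap (algebraMap R T) := by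
    rw [Ideal.mem_comap, hsum]
    exact Ideal.sum_mem _ fun σ _ => hgQ σ
  rwa [hQcomap] at this


theorem traceMulMap_injective
    {R S K L : Type*}
    [CommRing R] [IsDomain R] [IsLocalRing R] [IsIntegrallyClosed R]
    [CommRing S] [IsDomain S] [IsLocalRing S] [IsIntegrallyClosed S]
    [Algebra R S] [Module.Finite R S]
    [Field K] [Field L] [Algebra R K] [IsFractionRing R K]
    [Algebra S L] [IsFractionRing S L]
    [Algebra K L] [Algebra R L] [IsScalarTower R S L] [IsScalarTower R K L]
    [FiniteDimensional K L] [Algebra.IsSeparable K L]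
    (Tr : S →ₗ[R] R)
    (hTr : ∀ s : S, algebraMap R K (Tr s) = Algebra.trace K L (algebraMap S L s)) :
    Function.Injective (traceMulMap R S Tr) := by
  haveI : Algebra.IsIntegral R S := Algebra.IsIntegral.of_finite R S
  haveI : IsIntegrallyClosedIn S L := IsIntegrallyClosedIn.of_isIntegralClosure (R := S)
  haveI : IsIntegralClosure S R L := IsIntegralClosure.of_isIntegrallyClosedIn
  haveI := IsIntegralClosure.isLocalization R K L S
  rw [injective_iff_map_eq_zero]
  intro s hs
  have hs' : ∀ x : S, Tr (s * x) = 0 := fun x => DFunLike.congr_fun hs x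
  have hL : ∀ z : L, Algebra.traceForm K L (algebraMap S L s) z = 0 := by
    intro z
    obtain ⟨⟨a, m⟩, hm⟩ := IsLocalization.surj (Algebra.algebraMapSubmonoid S (nonZeroDivisors R)) z
    obtain ⟨r, hr, hrm⟩ := m.2
    have hc : (algebraMap R K r) ≠ 0 := fun h =>
      nonZeroDivisors.ne_zero hr ((map_eq_zero_iff _ (IsFractionRing.injective R K)).mp h)
    have key : (algebraMap R K r) * Algebra.trace K L (algebraMap S L s * z) = 0 := by
      have h1 : algebraMap S L (s * a) = (algebraMap R K r) • (algebraMap S L s * z) := by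
        rw [Algebra.smul_def]
        have : (algebraMap K L) ((algebraMap R K) r) = algebraMap S L (algebraMap R S r) := by
          rw [← IsScalarTower.algebraMap_apply, ← IsScalarTower.algebraMap_apply]
        rw [this, hrm, map_mul]
        rw [← hm]
        ring
      have h2 : Algebra.trace K L (algebraMap S L (s * a)) = 0 := by
        rw [← hTr, hs', map_zero]
      rw [h1, map_smul, smul_eq_mul] at h2
      exact h2
    have := mul_eq_zero.mp key
    simp only [Algebra.traceForm_apply]
    tauto
  have h0 : algebraMap S L s = 0 := (traceForm_nondegenerate K L).1 _ hL
  exact (map_eq_zero_iff _ (IsFractionRing.injective S L)).mp h0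


/-- Let `(R,m,k) ⊆ (S,n,ℓ)` be a module-finite local extension of normal local
domains with finite separable fraction field extension and surjective trace map `Tr : S → R`.
Let `D = S · Tr ⊆ Hom_R(S,R)`.  Then `{φ ∈ D : φ(S) ⊆ m} = n · D` and
`length_R (D / (n · D)) = [ℓ : k]`. -/
theorem trace_summands_count
    (R S K L : Type*)
    [CommRing R] [IsDomain R] [IsNoetherianRing R] [IsLocalRing R] [IsIntegrallyClosed R]
    [CommRing S] [IsDomain S] [IsNoetherianRing S] [IsLocalRing S] [IsIntegrallyClosed S]
    [Algebra R S] [Module.Finite R S]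
    (hinj : Function.Injective (algebraMap R S))
    [IsLocalHom (algebraMap R S)]
    [Field K] [Field L] [Algebra R K] [IsFractionRing R K]
    [Algebra S L] [IsFractionRing S L]
    [Algebra K L] [Algebra R L] [IsScalarTower R S L] [IsScalarTower R K L]
    [FiniteDimensional K L] [Algebra.IsSeparable K L]
    (Tr : S →ₗ[R] R)
    (hTr : ∀ s : S, algebraMap R K (Tr s) = Algebra.trace K L (algebraMap S L s))
    (hTrSurj : Function.Surjective Tr) :
    (∀ φ ∈ LinearMap.range (traceMulMap R S Tr),
      (∀ x : S, φ x ∈ IsLocalRing.maximalIdeal R) ↔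
        φ ∈ Submodule.map (traceMulMap R S Tr)
          ((IsLocalRing.maximalIdeal S).restrictScalars R)) ∧
    (letI : Algebra (IsLocalRing.ResidueField R) (IsLocalRing.ResidueField S) :=
        (IsLocalRing.ResidueField.map (algebraMap R S)).toAlgebra
     (Order.height
        (⊤ : Submodule R
          (@HasQuotient.Quotient (↥(LinearMap.range (traceMulMap R S Tr))) _
            (@Submodule.hasQuotient R _ _ _ _)
            (Submodule.comap (LinearMap.range (traceMulMap R S Tr)).subtype
              (Submodule.map (traceMulMap R S Tr)
                ((IsLocalRing.maximalIdeal S).restrictScalars R))))) : ℕ∞) =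
      (Module.finrank (IsLocalRing.ResidueField R) (IsLocalRing.ResidueField S) : ℕ∞)) := by
  have key : ∀ t ∈ maximalIdeal S, Tr t ∈ maximalIdeal R := fun t ht =>
    trace_mem_maximalIdeal Tr hTr ht
  constructor
  · rintro φ ⟨s, rfl⟩
    constructor
    · intro h
      refine ⟨s, ?_, rfl⟩
      show s ∈ maximalIdeal S
      by_contra hs
      have hu : IsUnit s := by
        by_contra hnu
        exact hs (IsLocalRing.mem_maximalIdeal s |>.mpr hnu)
      obtain ⟨v, hv⟩ := hu.exists_right_inv
      obtain ⟨c, hc⟩ := hTrSurj 1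
      have h1 : traceMulMap R S Tr s (v * c) = 1 := by
        show Tr (s * (v * c)) = 1
        rw [← mul_assoc, hv, one_mul, hc]
      have := h (v * c)
      rw [h1] at this
      exact (IsLocalRing.maximalIdeal.isMaximal R).ne_top (Ideal.eq_top_of_isUnit_mem _ this isUnit_one)
    · rintro ⟨s', hs', hss⟩ x
      have : traceMulMap R S Tr s' x = Tr (s' * x) := rfl
      rw [← hss]
      rw [this]
      exact key _ (Ideal.mul_mem_right x _ hs')
  · classical
    have hTinj : Function.Injective (traceMulMap R S Tr) := traceMulMap_injective Tr hTr
    set T := traceMulMap R S Tr with hTdef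
    set n' := ((maximalIdeal S).restrictScalars R) with hn'
    set D := LinearMap.range T with hD
    set N' := Submodule.comap D.subtype (Submodule.map T n') with hN'
    let e0 : S ≃ₗ[R] D := LinearEquiv.ofInjective T hTinj
    have hmap : Submodule.map (e0 : S →ₗ[R] D) n' = N' := by
      ext x
      simp only [Submodule.mem_map, hN', Submodule.mem_comap]
      constructor
      · rintro ⟨s, hs, rfl⟩
        exact ⟨s, hs, rfl⟩
      · rintro ⟨s, hs, hx⟩
        exact ⟨s, hs, Subtype.ext hx⟩
    let e1 : (S ⧸ n') ≃ₗ[R] (@HasQuotient.Quotient (↥D) _ (@Submodule.hasQuotient R _ _ _ _) N') := by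
      have e := @Submodule.Quotient.equiv R _ R _ _ _ _ _ S D _ _ _ _ n' N' e0 hmap
      exact e
    set k := ResidueField R with hk
    set V := ResidueField S with hV
    let φ : (S ⧸ n') ≃+ V :=
      (Submodule.Quotient.restrictScalarsEquiv R (maximalIdeal S)).toAddEquiv
    have hφmk : ∀ x : S, φ (Submodule.Quotient.mk x) = residue S x := fun x => rfl
    have hc : ∀ (r : R) (x : S), (residue R r) • (residue S x : V) = residue S (r • x) := by
      intro r x
      rw [Algebra.smul_def]
      show (ResidueField.map (algebraMap R S)) (residue R r) * residue S x = _
      rw [ResidueField.map_residue, ← map_mul, ← Algebra.smul_def]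
    have hsm : ∀ (r : R) (w : S ⧸ n'), φ (r • w) = (residue R r) • (φ w) := by
      intro r w
      induction w using Quotient.ind
      rename_i x
      show φ (r • Submodule.Quotient.mk x) = (residue R r) • (φ (Submodule.Quotient.mk x))
      rw [← Submodule.Quotient.mk_smul, hφmk, hφmk, hc]
    let O2 : Submodule R (S ⧸ n') ≃o Submodule k V :=
      { toFun := fun p =>
          { carrier := φ '' p
            add_mem' := by
              rintro a b ⟨x, hx, rfl⟩ ⟨y, hy, rfl⟩
              exact ⟨x + y, p.add_mem hx hy, map_add φ x y⟩
            zero_mem' := ⟨0, p.zero_mem, map_zero φ⟩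
            smul_mem' := by
              rintro c v ⟨w, hw, rfl⟩
              obtain ⟨r, rfl⟩ := IsLocalRing.residue_surjective c
              exact ⟨r • w, p.smul_mem r hw, hsm r w⟩ }
        invFun := fun q =>
          { carrier := φ ⁻¹' q
            add_mem' := fun {a b} ha hb => by
              show φ (a + b) ∈ q
              rw [map_add]
              exact q.add_mem ha hb
            zero_mem' := by
              show φ 0 ∈ q
              rw [map_zero]
              exact q.zero_mem
            smul_mem' := fun r w hw => by
              show φ (r • w) ∈ q
              rw [hsm]
              exact q.smul_mem _ hw }
        left_inv := fun p => SetLike.coe_injective (by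
          show φ ⁻¹' (φ '' ↑p) = ↑p
          exact Set.preimage_image_eq _ φ.injective)
        right_inv := fun q => SetLike.coe_injective (by
          show φ '' (φ ⁻¹' ↑q) = ↑q
          exact Set.image_preimage_eq_of_subset (by
            intro v _
            exact ⟨φ.symm v, φ.apply_symm_apply v⟩))
        map_rel_iff' := by
          intro p q
          show φ '' ↑p ⊆ φ '' ↑q ↔ p ≤ q
          rw [Set.image_subset_image_iff φ.injective]
          rfl }
    have hfinkV : Module.Finite k V := by
      obtain ⟨s, hs⟩ := Module.Finite.fg_top (R := R) (M := S)
      refine ⟨⟨s.image (residue S), ?_⟩⟩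
      rw [eq_top_iff]
      intro v hv
      clear hv
      obtain ⟨x, rfl⟩ := Ideal.Quotient.mk_surjective (I := maximalIdeal S) v
      have hx : x ∈ Submodule.span R (s : Set S) := by rw [hs]; trivial
      induction hx using Submodule.span_induction with
      | mem y hy =>
        refine Submodule.subset_span ?_
        rw [Finset.coe_image]
        exact Set.mem_image_of_mem _ hy
      | zero => rw [map_zero]; exact Submodule.zero_mem _
      | add y z _ _ hy hz =>
        rw [map_add]
        exact Submodule.add_mem _ hy hz
      | smul r y _ hy =>
        show (residue S (r • y) : V) ∈ _
        rw [← hc r y]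
        exact Submodule.smul_mem _ _ hy
    haveI := hfinkV
    have h1 : Order.height (⊤ : Submodule R (@HasQuotient.Quotient (↥D) _ (@Submodule.hasQuotient R _ _ _ _) N')) =
        Order.height (⊤ : Submodule R (S ⧸ n')) := by
      let O1 : Submodule R (@HasQuotient.Quotient (↥D) _ (@Submodule.hasQuotient R _ _ _ _) N') ≃o Submodule R (S ⧸ n') :=
        Submodule.orderIsoMapComap e1.symm
      have htop : O1 ⊤ = ⊤ := by
        show Submodule.map (e1.symm : (@HasQuotient.Quotient (↥D) _ (@Submodule.hasQuotient R _ _ _ _) N') →ₗ[R] (S ⧸ n')) ⊤ = ⊤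
        rw [Submodule.map_top, LinearEquiv.range]
      rw [← htop, Order.height_orderIso O1 ⊤]
    have h2 : Order.height (⊤ : Submodule R (S ⧸ n')) =
        Order.height (⊤ : Submodule k V) := by
      have htop : O2 ⊤ = ⊤ := by
        refine SetLike.coe_injective ?_
        show φ '' Set.univ = Set.univ
        exact Set.image_univ_of_surjective (fun v => ⟨φ.symm v, φ.apply_symm_apply v⟩)
      rw [← htop, Order.height_orderIso O2 ⊤]
    rw [h1, h2, height_top_eq_finrank k V]
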